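/- Let p be a prime and Y a finite group whose Sylow p-subgroups are self-normalizing. If X ≤ Y has index coprime to p, then X is pronormal in Y. -/

import Mathlib

/-- A group `G` belongs to the class `𝒳_p` if every Sylow `p`-subgroup is self-normalizing. -/
def SylowSelfNormalizing (p : ℕ) (G : Type*) [Group G] : Prop :=
  ∀ P : Sylow p G, Subgroup.normalizer ((P : Subgroup G) : Set G) = P

/-- The conjugate subgroup `H^g = g H g⁻¹` (conjugation by `g`). -/
def conjSub {G : Type*} [Group G] (g : G) (H : Subgroup G) : Subgroup G :=
  H.map (MulAut.conj g).toMonoidHom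

/-- A subgroup `H` of `G` is pronormal in `G` if for every `g ∈ G` the subgroups `H` and
`H^g` are conjugate by an element of `⟨H, H^g⟩`. -/
def IsPronormal {G : Type*} [Group G] (H : Subgroup G) : Prop :=
  ∀ g : G, ∃ x ∈ H ⊔ conjSub g H, conjSub x H = conjSub g H

open Pointwise in
lemma conjSub_eq_smul {G : Type*} [Group G] (g : G) (H : Subgroup G) :
    conjSub g H = MulAut.conj g • H := rfl

open Pointwise in
lemma conjSub_mul {G : Type*} [Group G] (a b : G) (H : Subgroup G) :
    conjSub (a * b) H = conjSub a (conjSub b H) := by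
  simp [conjSub_eq_smul, map_mul, mul_smul]

lemma conjSub_self {G : Type*} [Group G] {a : G} {H : Subgroup G} (ha : a ∈ H) :
    conjSub a H = H := by
  ext x
  simp only [conjSub, Subgroup.mem_map, MulEquiv.coe_toMonoidHom, MulAut.conj_apply]
  constructor
  · rintro ⟨y, hy, rfl⟩; exact H.mul_mem (H.mul_mem ha hy) (H.inv_mem ha)
  · intro hx; exact ⟨a⁻¹ * x * a, by exact H.mul_mem (H.mul_mem (H.inv_mem ha) hx) ha, by group⟩

lemma exists_sylow_le {p : ℕ} [Fact p.Prime] {Y : Type*} [Group Y] [Finite Y]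
    (X : Subgroup Y) (hX : Nat.Coprime X.index p) :
    ∃ P : Sylow p Y, (P : Subgroup Y) ≤ X := by
  obtain ⟨Q⟩ := (inferInstance : Nonempty (Sylow p X))
  have hQp : IsPGroup p ((Q : Subgroup X).map X.subtype) := Q.2.map X.subtype
  obtain ⟨P, hle⟩ := hQp.exists_le_sylow
  have hQX : (Q : Subgroup X).map X.subtype ≤ X := by
    rintro x ⟨y, _, rfl⟩; exact y.2
  have hnd : ¬ p ∣ ((Q : Subgroup X).map X.subtype).index := by
    rw [Subgroup.index_map_subtype]
    intro h
    rcases (Fact.out : p.Prime).dvd_mul.mp h with h | h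
    · exact Q.not_dvd_index h
    · exact ((Fact.out : p.Prime).coprime_iff_not_dvd.mp hX.symm) h
  have hrel := Subgroup.relIndex_mul_index hle
  obtain ⟨n, hn⟩ := P.2.index (((Q : Subgroup X).map X.subtype).subgroupOf P)
  have hrel1 : ((Q : Subgroup X).map X.subtype).relIndex P = 1 := by
    rcases Nat.eq_zero_or_pos n with rfl | hnpos
    · simpa using hn
    · exfalso
      apply hnd
      rw [← hrel, Subgroup.relIndex, hn]
      exact Dvd.dvd.mul_right (dvd_pow_self p hnpos.ne') _
  have := Subgroup.relIndex_eq_one.mp hrel1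
  exact ⟨P, this.trans hQX⟩

/-- If the finite group `Y` has self-normalizing Sylow `p`-subgroups and
`X ≤ Y` has index coprime to `p`, then `X` is pronormal in `Y`. -/
theorem stmt12 {p : ℕ} [Fact p.Prime] {Y : Type*} [Group Y] [Finite Y]
    (hY : SylowSelfNormalizing p Y) (X : Subgroup Y) (hX : Nat.Coprime X.index p) :
    IsPronormal X := by
  obtain ⟨P, hPX⟩ := exists_sylow_le X hX
  intro g
  have hXK : X ≤ X ⊔ conjSub g X := le_sup_left
  have hgXK : conjSub g X ≤ X ⊔ conjSub g X := le_sup_right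
  have hPK : (P : Subgroup Y) ≤ X ⊔ conjSub g X := hPX.trans hXK
  have hP'le : ((g • P : Sylow p Y) : Subgroup Y) ≤ X ⊔ conjSub g X := by
    refine le_trans ?_ hgXK
    rw [Sylow.coe_subgroup_smul]
    exact Subgroup.map_mono hPX
  obtain ⟨h, hh⟩ := MulAction.exists_smul_eq (↥(X ⊔ conjSub g X))
    ((g • P).subtype hP'le) (P.subtype hPK)
  rw [Sylow.smul_subtype] at hh
  have heq : ((h : Y) • (g • P) : Sylow p Y) = P := Sylow.subtype_injective hh
  rw [smul_smul] at heq
  have hmem : (h : Y) * g ∈ (P : Subgroup Y) := by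
    have := Sylow.smul_eq_iff_mem_normalizer.mp heq
    exact (congrArg (fun H : Subgroup Y => (h : Y) * g ∈ H) (hY P)).mp this
  have hmemX : (h : Y) * g ∈ X := hPX hmem
  refine ⟨(h : Y)⁻¹, (X ⊔ conjSub g X).inv_mem h.2, ?_⟩
  have : conjSub g X = conjSub ((h : Y)⁻¹ * ((h : Y) * g)) X := by group
  rw [conjSub_mul, conjSub_self hmemX] at this
  exact this.symm
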